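/- (Lower bound 1.05 on price of stability when minor setup costs are private.) Consider the JRP instance with n = 2 retailers, B = 1, K_0 = 5, H_1 = H_2 = 1, K_1 = 1, K_2 = 6. Then the optimal centralized policy is T^c = (2,2) with C(T^c) = 10, and for any weights w_1, w_2 ≥ 0 with w_1 + w_2 > 0 and w_1 ≤ w_2 (using the convention that when an order group has total weight zero, K_0 is split equally among its members), every Nash equilibrium T of the induced WPS game satisfies C(T) ≥ 21/2 = 1.05·C(T^c). -/

import Mathlib

open Finset

noncomputable section

/-- `t` is a power-of-two (POT) value with base period `B`. -/
def IsPOT (B t : ℝ) : Prop := ∃ z : ℤ, t = (2 : ℝ) ^ z * B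

/-- Membership of an interval `t` in retailer `i`'s strategy set `Γ_i`,
given major setup cost `K0`, minor setup cost `Ki` and holding parameter `Hi`. -/
def InStrategy (B K0 Ki Hi t : ℝ) : Prop :=
  IsPOT B t ∧ Real.sqrt (Ki / (2 * Hi)) ≤ t ∧ t ≤ Real.sqrt (2 * (K0 + Ki) / Hi)

/-- `N[τ; T_{-i}] = {i} ∪ {j : T j ≤ τ}`. -/
def grp {n : ℕ} (T : Fin n → ℝ) (i : Fin n) (τ : ℝ) : Finset (Fin n) :=
  insert i (Finset.univ.filter fun j => T j ≤ τ)

/-- The set of levels `L(T) = {T j : j ∈ N}`. -/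
def levels {n : ℕ} (T : Fin n → ℝ) : Finset ℝ := Finset.image T Finset.univ

/-- `1/τ⁺`: the inverse of the smallest level larger than `τ`, with the
convention that it is `0` when no larger level exists. -/
def invSucc (L : Finset ℝ) (τ : ℝ) : ℝ :=
  if h : (L.filter fun u => τ < u).Nonempty then 1 / (L.filter fun u => τ < u).min' h
  else 0

/-- Major-setup share `x_i(T)` of retailer `i` under the weighted proportional
sharing rule with weights `w` (intended for strictly positive weights). -/
def share {n : ℕ} (K0 : ℝ) (w T : Fin n → ℝ) (i : Fin n) : ℝ :=
  ∑ τ ∈ (levels T).filter (fun τ => T i ≤ τ),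
    (1 / τ - invSucc (levels T) τ) *
      (w i / ∑ j ∈ Finset.univ.filter (fun j => T j ≤ τ), w j) * K0

/-- Major-setup share for nonnegative weights: if the order group has total
weight zero, the major setup cost is split equally among its members. -/
def shareZ {n : ℕ} (K0 : ℝ) (w T : Fin n → ℝ) (i : Fin n) : ℝ :=
  ∑ τ ∈ (levels T).filter (fun τ => T i ≤ τ),
    (1 / τ - invSucc (levels T) τ) *
      (if 0 < ∑ j ∈ Finset.univ.filter (fun j => T j ≤ τ), w j
        then w i / ∑ j ∈ Finset.univ.filter (fun j => T j ≤ τ), w j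
        else 1 / ((Finset.univ.filter fun j => T j ≤ τ) : Finset (Fin n)).card) * K0

/-- Individual cost `f_i(T) = H_i T_i + K_i / T_i + x_i(T)` under `WPS^w`. -/
def indCost {n : ℕ} (K0 : ℝ) (K H w : Fin n → ℝ) (T : Fin n → ℝ) (i : Fin n) : ℝ :=
  H i * T i + K i / T i + share K0 w T i

/-- Individual cost under the zero-weight-tolerant sharing rule. -/
def indCostZ {n : ℕ} (K0 : ℝ) (K H w : Fin n → ℝ) (T : Fin n → ℝ) (i : Fin n) : ℝ :=
  H i * T i + K i / T i + shareZ K0 w T i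

/-- System cost `C(T)`. -/
def sysCost {n : ℕ} (K0 : ℝ) (K H : Fin n → ℝ) (T : Fin n → ℝ) : ℝ :=
  (∑ i, (H i * T i + K i / T i)) + K0 / (⨅ i, T i)

/-- Nash equilibrium of the game induced by `WPS^w`. -/
def IsNE {n : ℕ} (B K0 : ℝ) (K H w : Fin n → ℝ) (T : Fin n → ℝ) : Prop :=
  (∀ i, InStrategy B K0 (K i) (H i) (T i)) ∧
  ∀ i t, InStrategy B K0 (K i) (H i) t →
    indCost K0 K H w T i ≤ indCost K0 K H w (Function.update T i t) i

/-- Nash equilibrium for the zero-weight-tolerant sharing rule. -/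
def IsNEZ {n : ℕ} (B K0 : ℝ) (K H w : Fin n → ℝ) (T : Fin n → ℝ) : Prop :=
  (∀ i, InStrategy B K0 (K i) (H i) (T i)) ∧
  ∀ i t, InStrategy B K0 (K i) (H i) t →
    indCostZ K0 K H w T i ≤ indCostZ K0 K H w (Function.update T i t) i

/-- `s = min_{∅ ⊂ S ⊆ N} (K0 + Σ_{i∈S} K_i)/(Σ_{i∈S} H_i)`. -/
def sval (n : ℕ) (K0 : ℝ) (K H : Fin n → ℝ) : ℝ :=
  sInf ((fun S : Finset (Fin n) => (K0 + ∑ i ∈ S, K i) / ∑ i ∈ S, H i) '' {S | S.Nonempty})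

/-- `[b]_POT`: the POT value `a` with `b/√2 < a ≤ √2·b`. -/
def potRound (B b : ℝ) : ℝ := (2 : ℝ) ^ (round (Real.logb 2 (b / B))) * B

/-- The optimal centralized POT policy `T^c`. -/
def Tc (n : ℕ) (B K0 : ℝ) (K H : Fin n → ℝ) (i : Fin n) : ℝ :=
  if K i ≤ sval n K0 K H * H i then potRound B (Real.sqrt (sval n K0 K H))
  else potRound B (Real.sqrt (K i / H i))

end

section AuxLemmas

lemma iInf2 (f : Fin 2 → ℝ) : (⨅ i, f i) = min (f 0) (f 1) := by
  apply le_antisymm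
  · exact le_min (ciInf_le (Set.Finite.bddBelow (Set.finite_range f)) 0)
      (ciInf_le (Set.Finite.bddBelow (Set.finite_range f)) 1)
  · exact le_ciInf fun i => by fin_cases i <;> simp [min_le_left, min_le_right]

lemma pot0' (t : ℝ) (h : InStrategy 1 5 1 1 t) : t = 1 ∨ t = 2 := by
  obtain ⟨⟨z, hz⟩, h1, h2⟩ := h
  rw [mul_one] at hz
  subst hz
  norm_num at h1 h2
  have hs2 : Real.sqrt 2 < 2 := (Real.sqrt_lt' (by norm_num)).2 (by norm_num)
  have hlo : (2:ℝ)^(-1:ℤ) < 2^z := lt_of_lt_of_le (by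
    rw [show ((2:ℝ)^(-1:ℤ)) = 2⁻¹ by norm_num]
    exact inv_strictAnti₀ (Real.sqrt_pos.2 (by norm_num)) hs2) h1
  have hhi : (2:ℝ)^z < 2^(2:ℤ) := lt_of_le_of_lt h2 (by
    rw [show ((2:ℝ)^(2:ℤ)) = 4 by norm_num]
    exact (Real.sqrt_lt' (by norm_num)).2 (by norm_num))
  rw [zpow_lt_zpow_iff_right₀ (by norm_num : (1:ℝ) < 2)] at hlo hhi
  interval_cases z
  · left; norm_num
  · right; norm_num

lemma pot1' (t : ℝ) (h : InStrategy 1 5 6 1 t) : t = 2 ∨ t = 4 := by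
  obtain ⟨⟨z, hz⟩, h1, h2⟩ := h
  rw [mul_one] at hz
  subst hz
  norm_num at h1 h2
  have hlo : (2:ℝ)^(0:ℤ) < 2^z := lt_of_lt_of_le (by
    rw [show ((2:ℝ)^(0:ℤ)) = 1 by norm_num]
    exact (Real.lt_sqrt (by norm_num)).2 (by norm_num)) h1
  have hhi : (2:ℝ)^z < 2^(3:ℤ) := lt_of_le_of_lt h2 (by
    rw [show ((2:ℝ)^(3:ℤ)) = 8 by norm_num]
    exact (Real.sqrt_lt' (by norm_num)).2 (by norm_num))
  rw [zpow_lt_zpow_iff_right₀ (by norm_num : (1:ℝ) < 2)] at hlo hhi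
  interval_cases z
  · left; norm_num
  · right; norm_num

lemma strat4' : InStrategy 1 5 6 1 4 := by
  refine ⟨⟨2, by norm_num⟩, ?_, ?_⟩
  · norm_num
    calc Real.sqrt 3 ≤ Real.sqrt 16 := Real.sqrt_le_sqrt (by norm_num)
    _ = 4 := by rw [show (16:ℝ) = 4^2 by norm_num, Real.sqrt_sq (by norm_num)]
  · norm_num
    calc (4:ℝ) = Real.sqrt 16 := by
          rw [show (16:ℝ) = 4^2 by norm_num, Real.sqrt_sq (by norm_num)]
    _ ≤ Real.sqrt 22 := Real.sqrt_le_sqrt (by norm_num)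

lemma round_logb' : round (Real.logb 2 (Real.sqrt 6 / 1)) = 1 := by
  have h6 : (0:ℝ) < Real.sqrt 6 := Real.sqrt_pos.2 (by norm_num)
  have hlo : (1/2 : ℝ) ≤ Real.logb 2 (Real.sqrt 6) := by
    rw [Real.le_logb_iff_rpow_le (by norm_num) h6]
    rw [show ((2:ℝ) ^ ((1:ℝ)/2)) = Real.sqrt 2 from (Real.sqrt_eq_rpow 2).symm]
    exact Real.sqrt_le_sqrt (by norm_num)
  have hhi : Real.logb 2 (Real.sqrt 6) < 3/2 := by
    rw [Real.logb_lt_iff_lt_rpow (by norm_num) h6]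
    have h8 : ((2:ℝ) ^ ((3:ℝ)/2)) = Real.sqrt 8 := by
      rw [show ((3:ℝ)/2) = 3 * (1/2) by norm_num, Real.rpow_mul (by norm_num)]
      rw [show ((2:ℝ)^(3:ℝ)) = ((2:ℝ)^(3:ℕ) : ℝ) from by
        rw [← Real.rpow_natCast]; norm_num]
      rw [← Real.sqrt_eq_rpow]; norm_num
    rw [h8]
    exact Real.sqrt_lt_sqrt (by norm_num) (by norm_num)
  rw [div_one, round_eq, Int.floor_eq_iff]
  constructor <;> push_cast <;> linarith

lemma sval6' : sval 2 5 ![1,6] ![1,1] = 6 := by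
  have key : ∀ S : Finset (Fin 2), S.Nonempty ↔ (S = {0} ∨ S = {1} ∨ S = {0,1}) := by decide
  have hset : {S : Finset (Fin 2) | S.Nonempty} = {({0} : Finset (Fin 2)), {1}, {0,1}} := by
    ext S; simpa [Set.mem_insert_iff] using key S
  rw [sval, hset]
  rw [Set.image_insert_eq, Set.image_insert_eq, Set.image_singleton]
  have h1 : ((5:ℝ) + ∑ i ∈ ({0} : Finset (Fin 2)), (![1,6] : Fin 2 → ℝ) i) /
      ∑ i ∈ ({0} : Finset (Fin 2)), (![1,1] : Fin 2 → ℝ) i = 6 := by norm_num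
  have h2 : ((5:ℝ) + ∑ i ∈ ({1} : Finset (Fin 2)), (![1,6] : Fin 2 → ℝ) i) /
      ∑ i ∈ ({1} : Finset (Fin 2)), (![1,1] : Fin 2 → ℝ) i = 11 := by norm_num
  have h3 : ((5:ℝ) + ∑ i ∈ ({0,1} : Finset (Fin 2)), (![1,6] : Fin 2 → ℝ) i) /
      ∑ i ∈ ({0,1} : Finset (Fin 2)), (![1,1] : Fin 2 → ℝ) i = 6 := by
    rw [Finset.sum_pair (by decide), Finset.sum_pair (by decide)]; norm_num
  rw [h1, h2, h3]
  rw [csInf_insert (Set.Finite.bddBelow (by simp)) (by simp)]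
  rw [csInf_insert (Set.Finite.bddBelow (by simp)) (by simp)]
  rw [csInf_singleton]
  norm_num

lemma tc2 : ∀ i : Fin 2, Tc 2 1 5 ![1, 6] ![1, 1] i = 2 := by
  intro i
  have hpr : potRound 1 (Real.sqrt (sval 2 5 ![1,6] ![1,1])) = 2 := by
    rw [sval6', potRound, round_logb']; norm_num
  fin_cases i <;>
  · rw [Tc, if_pos (by rw [sval6']; norm_num)]
    exact hpr

lemma shareZ22 (w : Fin 2 → ℝ) (hw : 0 < w 0 + w 1) :
    shareZ 5 w ![2,2] 1 = (1/2) * (w 1 / (w 0 + w 1)) * 5 := by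
  have hl : levels ![(2:ℝ),2] = {2} := by
    simp [levels, show (univ : Finset (Fin 2)) = {0,1} from by decide]
  have hg : (univ.filter fun j => (![(2:ℝ),2]) j ≤ 2) = (univ : Finset (Fin 2)) := by
    simp [Finset.filter_eq_self]
  rw [shareZ, hl]
  rw [show ({2}:Finset ℝ).filter (fun τ => (![(2:ℝ),2]) 1 ≤ τ) = {2} from by
    simp [Finset.filter_singleton]]
  rw [Finset.sum_singleton, hg, invSucc]
  rw [dif_neg (by simp [Finset.filter_singleton])]
  rw [if_pos (by simpa [Fin.sum_univ_two] using hw)]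
  simp [Fin.sum_univ_two]

lemma shareZ24 (w : Fin 2 → ℝ) (hw : 0 < w 0 + w 1) :
    shareZ 5 w ![2,4] 1 = (1/4) * (w 1 / (w 0 + w 1)) * 5 := by
  have hl : levels ![(2:ℝ),4] = {2,4} := by
    simp [levels, show (univ : Finset (Fin 2)) = {0,1} from by decide]
  have hg : (univ.filter fun j => (![(2:ℝ),4]) j ≤ 4) = (univ : Finset (Fin 2)) := by
    simp [Finset.filter_eq_self]; norm_num
  rw [shareZ, hl]
  rw [show ({2,4}:Finset ℝ).filter (fun τ => (![(2:ℝ),4]) 1 ≤ τ) = {4} from by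
    simp [Finset.filter_insert, Finset.filter_singleton]; norm_num]
  rw [Finset.sum_singleton, hg, invSucc]
  rw [dif_neg (by simp [Finset.filter_insert, Finset.filter_singleton]; norm_num)]
  rw [if_pos (by simpa [Fin.sum_univ_two] using hw)]
  simp [Fin.sum_univ_two]

end AuxLemmas

theorem statement13 :
    (∀ i : Fin 2, Tc 2 1 5 ![1, 6] ![1, 1] i = 2) ∧
    sysCost 5 ![1, 6] ![1, 1] (Tc 2 1 5 ![1, 6] ![1, 1]) = 10 ∧
    ∀ w : Fin 2 → ℝ, (∀ i, 0 ≤ w i) → 0 < w 0 + w 1 → w 0 ≤ w 1 →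
      ∀ T : Fin 2 → ℝ, IsNEZ 1 5 ![1, 6] ![1, 1] w T →
        21 / 2 ≤ sysCost 5 ![1, 6] ![1, 1] T := by
  refine ⟨tc2, ?_, ?_⟩
  · have hT : Tc 2 1 5 ![1, 6] ![1, 1] = fun _ => (2:ℝ) := funext fun i => tc2 i
    rw [hT, sysCost, Fin.sum_univ_two, ciInf_const]
    norm_num
  · intro w hw0 hwpos hwle T hNE
    obtain ⟨hfeas, hdev⟩ := hNE
    have h0 : T 0 = 1 ∨ T 0 = 2 := pot0' (T 0) (by simpa using hfeas 0)
    have h1 : T 1 = 2 ∨ T 1 = 4 := pot1' (T 1) (by simpa using hfeas 1)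
    rcases h0 with h0 | h0 <;> rcases h1 with h1 | h1
    · rw [sysCost, iInf2, Fin.sum_univ_two, h0, h1]; norm_num
    · rw [sysCost, iInf2, Fin.sum_univ_two, h0, h1]; norm_num
    · -- T = (2,2): not a NE, contradiction
      exfalso
      have hT : T = ![2,2] := by
        funext i; fin_cases i
        · simpa using h0
        · simpa using h1
      have hupd : Function.update T 1 (4:ℝ) = ![2,4] := by
        funext i; fin_cases i
        · simpa [Function.update] using h0
        · simp [Function.update]
      have hineq := hdev 1 4 (by simpa using strat4')
      rw [hupd] at hineq
      rw [indCostZ, indCostZ, hT, shareZ22 w hwpos, shareZ24 w hwpos] at hineq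
      simp only [Matrix.cons_val_one, Matrix.cons_val_zero, Matrix.head_cons] at hineq
      norm_num at hineq
      have hd : w 1 / (w 0 + w 1) ≤ 2/5 := by linarith
      have hr : w 1 ≤ 2/5 * (w 0 + w 1) := (div_le_iff₀ hwpos).1 hd
      linarith
    · rw [sysCost, iInf2, Fin.sum_univ_two, h0, h1]; norm_num
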